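/- Let m > 0. Let I : [0,∞) → (0,1] and c : [0,∞) → [0, 1/m] be continuous, and let V : [0,∞) → ℝ be differentiable with V'(t) = (1 − m·c(t))·I(t)·(V(t) + 1) + c(t) for all t ≥ 0, where additionally c(t) = 0 whenever I(t)·(V(t) + 1) < 1/m (the optimal-feedback selection). If there exists t ≥ 0 with V(t) = 0, then −1 ≤ V(0) ≤ 0. (Adjoint trajectories starting with V(0) < −1 decrease forever, and those starting with V(0) > 0 increase forever, so neither can satisfy the terminal condition V = 0.) -/
import Mathlib

open Set Filter Topology

theorem stmt13 (m : ℝ) (hm : 0 < m) (I c V : ℝ → ℝ)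
    (hI : ∀ t, 0 ≤ t → I t ∈ Set.Ioc (0:ℝ) 1)
    (hc : ∀ t, 0 ≤ t → c t ∈ Set.Icc (0:ℝ) (1 / m))
    (hIcont : ContinuousOn I (Set.Ici 0))
    (hccont : ContinuousOn c (Set.Ici 0))
    (hV : ∀ t, 0 ≤ t →
      HasDerivWithinAt V ((1 - m * c t) * I t * (V t + 1) + c t) (Set.Ici 0) t)
    (hfeedback : ∀ t, 0 ≤ t → I t * (V t + 1) < 1 / m → c t = 0)
    (hterm : ∃ t, 0 ≤ t ∧ V t = 0) :
    -1 ≤ V 0 ∧ V 0 ≤ 0 := by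
  obtain ⟨T, hT0, hVT⟩ := hterm
  have hVcont : ContinuousOn V (Ici 0) := fun t ht => (hV t ht).continuousWithinAt
  constructor
  · -- -1 ≤ V 0
    by_contra h
    push_neg at h
    set A : Set ℝ := Icc 0 T ∩ V ⁻¹' (Ici (-1)) with hA
    have hTA : T ∈ A := ⟨⟨hT0, le_rfl⟩, by simp [hVT]⟩
    have hAne : A.Nonempty := ⟨T, hTA⟩
    have hAbdd : BddBelow A := ⟨0, fun x hx => hx.1.1⟩
    have hAclosed : IsClosed A := by
      exact (hVcont.mono (Icc_subset_Ici_self)).preimage_isClosed_of_isClosed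
        isClosed_Icc isClosed_Ici
    set s := sInf A with hs
    have hsA : s ∈ A := hAclosed.csInf_mem hAne hAbdd
    have hs0 : 0 < s := by
      rcases lt_or_eq_of_le hsA.1.1 with h' | h'
      · exact h'
      · exfalso; have := hsA.2; rw [← h'] at this
        simp only [mem_preimage, mem_Ici] at this; linarith
    have hlt : ∀ t ∈ Ico (0:ℝ) s, V t < -1 := by
      intro t ht
      by_contra hcon
      push_neg at hcon
      have : t ∈ A := ⟨⟨ht.1, le_trans ht.2.le hsA.1.2⟩, hcon⟩
      exact absurd (csInf_le hAbdd this) (not_le.mpr ht.2)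
    -- V is antitone on [0, s]
    have hanti : AntitoneOn V (Icc 0 s) := by
      apply antitoneOn_of_deriv_nonpos (convex_Icc 0 s)
        (hVcont.mono (Icc_subset_Ici_self))
      · intro x hx
        rw [interior_Icc] at hx
        exact ((hV x hx.1.le).hasDerivAt (Ici_mem_nhds hx.1)).differentiableAt.differentiableWithinAt
      · intro x hx
        rw [interior_Icc] at hx
        have hx0 : 0 < x := hx.1
        have hVx : V x < -1 := hlt x ⟨hx0.le, hx.2⟩
        have hIx := hI x hx0.le
        have hcx : c x = 0 := by
          apply hfeedback x hx0.le
          have : I x * (V x + 1) ≤ 0 :=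
            mul_nonpos_of_nonneg_of_nonpos hIx.1.le (by linarith)
          have h1m : (0:ℝ) < 1 / m := by positivity
          linarith
        have hd := ((hV x hx0.le).hasDerivAt (Ici_mem_nhds hx0)).deriv
        rw [hd, hcx]
        have : I x * (V x + 1) ≤ 0 :=
          mul_nonpos_of_nonneg_of_nonpos hIx.1.le (by linarith)
        nlinarith
    have h1 : V s ≤ V 0 := hanti ⟨le_rfl, hs0.le⟩ ⟨hs0.le, le_rfl⟩ hs0.le
    have h2 : -1 ≤ V s := hsA.2
    linarith
  · -- V 0 ≤ 0
    by_contra h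
    push_neg at h
    set A : Set ℝ := Icc 0 T ∩ V ⁻¹' (Iic 0) with hA
    have hTA : T ∈ A := ⟨⟨hT0, le_rfl⟩, by simp [hVT]⟩
    have hAne : A.Nonempty := ⟨T, hTA⟩
    have hAbdd : BddBelow A := ⟨0, fun x hx => hx.1.1⟩
    have hAclosed : IsClosed A :=
      (hVcont.mono (Icc_subset_Ici_self)).preimage_isClosed_of_isClosed
        isClosed_Icc isClosed_Iic
    set s := sInf A with hs
    have hsA : s ∈ A := hAclosed.csInf_mem hAne hAbdd
    have hs0 : 0 < s := by
      rcases lt_or_eq_of_le hsA.1.1 with h' | h'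
      · exact h'
      · exfalso; have := hsA.2; rw [← h'] at this
        simp only [mem_preimage, mem_Iic] at this; linarith
    have hlt : ∀ t ∈ Ico (0:ℝ) s, 0 < V t := by
      intro t ht
      by_contra hcon
      push_neg at hcon
      have : t ∈ A := ⟨⟨ht.1, le_trans ht.2.le hsA.1.2⟩, hcon⟩
      exact absurd (csInf_le hAbdd this) (not_le.mpr ht.2)
    haveI hne : (𝓝[Ico (0:ℝ) s] s).NeBot := by
      rw [← mem_closure_iff_nhdsWithin_neBot, closure_Ico hs0.ne]
      exact ⟨hs0.le, le_rfl⟩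
    have hVs0 : V s = 0 := by
      have htend : Tendsto V (𝓝[Ico (0:ℝ) s] s) (𝓝 (V s)) :=
        ((hVcont s hs0.le).mono (fun x hx => hx.1)).tendsto
      have hge : 0 ≤ V s := by
        refine ge_of_tendsto htend ?_
        filter_upwards [eventually_mem_nhdsWithin] with t ht
        exact (hlt t ht).le
      exact le_antisymm hsA.2 hge
    -- derivative at s is positive
    set d := (1 - m * c s) * I s * (V s + 1) + c s with hd
    have hIs := hI s hs0.le
    have hcs := hc s hs0.le
    have hdpos : 0 < d := by
      rw [hd, hVs0]
      have h1 : 0 ≤ 1 - m * c s := by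
        have := hcs.2
        rw [le_div_iff₀ hm] at this
        nlinarith
      rcases eq_or_lt_of_le hcs.1 with hcz | hcz
      · rw [← hcz]; ring_nf; nlinarith [hIs.1]
      · nlinarith [hIs.1]
    have hslope := hasDerivWithinAt_iff_tendsto_slope.mp (hV s hs0.le)
    have hsub : Ico (0:ℝ) s ⊆ Ici 0 \ {s} :=
      fun x hx => ⟨hx.1, by simp [ne_of_lt hx.2]⟩
    have hslope' : Tendsto (slope V s) (𝓝[Ico (0:ℝ) s] s) (𝓝 d) :=
      hslope.mono_left (nhdsWithin_mono s hsub)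
    have hev : ∀ᶠ t in 𝓝[Ico (0:ℝ) s] s, 0 < slope V s t :=
      hslope'.eventually (eventually_gt_nhds hdpos)
    obtain ⟨t, hts, htm⟩ := (hev.and eventually_mem_nhdsWithin).exists
    have hts' : t - s < 0 := by linarith [htm.2]
    have hslope_def : slope V s t = (V t - V s) / (t - s) := slope_def_field V s t
    rw [hslope_def, hVs0, sub_zero] at hts
    have hVtneg : V t < 0 := by
      by_contra hge
      push_neg at hge
      have : V t / (t - s) ≤ 0 := div_nonpos_of_nonneg_of_nonpos hge hts'.le
      linarith
    exact absurd (hlt t htm) (not_lt.mpr hVtneg.le)
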